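/- Hintikka formula characterization: for a finite set Φ of proposition symbols, k ∈ ℕ, and pointed Φ-models (K,w), (K',w'), the following are equivalent: (1) K,w and K',w' satisfy the same ML-formulas of modal depth ≤ k; (2) K,w ⇄_k K',w'; (3) K',w' ⊨ χ^k_{K,w}. -/

import Mathlib

namespace TeamSem

structure KripkeModel (Φ : Type) where
  W : Type
  R : W → W → Prop
  V : Φ → Set W

variable {Φ : Type}

/-- Image `R[T]` of a team under the accessibility relation. -/
def img (K : KripkeModel Φ) (T : Set K.W) : Set K.W := {v | ∃ w ∈ T, K.R w v}

/-- Preimage `R⁻¹[S]`. -/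
def preimg (K : KripkeModel Φ) (S : Set K.W) : Set K.W := {w | ∃ v ∈ S, K.R w v}

/-- `T[R]S` : `S ⊆ R[T]` and `T ⊆ R⁻¹[S]`. -/
def relStep (K : KripkeModel Φ) (T S : Set K.W) : Prop :=
  S ⊆ img K T ∧ T ⊆ preimg K S

/-- ML formulas in negation normal form. -/
inductive MLFormula (Φ : Type) where
  | atom : Φ → MLFormula Φ
  | natom : Φ → MLFormula Φ
  | and : MLFormula Φ → MLFormula Φ → MLFormula Φ
  | or : MLFormula Φ → MLFormula Φ → MLFormula Φ
  | dia : MLFormula Φ → MLFormula Φ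
  | box : MLFormula Φ → MLFormula Φ

/-- Lax team semantics for ML. -/
def mlSat (K : KripkeModel Φ) : MLFormula Φ → Set K.W → Prop
  | .atom p, T => T ⊆ K.V p
  | .natom p, T => T ∩ K.V p = ∅
  | .and φ ψ, T => mlSat K φ T ∧ mlSat K ψ T
  | .or φ ψ, T => ∃ T₁ T₂, T = T₁ ∪ T₂ ∧ mlSat K φ T₁ ∧ mlSat K ψ T₂
  | .dia φ, T => ∃ S, relStep K T S ∧ mlSat K φ S
  | .box φ, T => mlSat K φ (img K T)

/-- Standard single-world Kripke semantics for ML. -/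
def mlSatW (K : KripkeModel Φ) : MLFormula Φ → K.W → Prop
  | .atom p, w => w ∈ K.V p
  | .natom p, w => w ∉ K.V p
  | .and φ ψ, w => mlSatW K φ w ∧ mlSatW K ψ w
  | .or φ ψ, w => mlSatW K φ w ∨ mlSatW K ψ w
  | .dia φ, w => ∃ v, K.R w v ∧ mlSatW K φ v
  | .box φ, w => ∀ v, K.R w v → mlSatW K φ v

/-- Modal depth of an ML formula. -/
def mlMd : MLFormula Φ → ℕ
  | .atom _ => 0
  | .natom _ => 0
  | .and φ ψ => max (mlMd φ) (mlMd ψ)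
  | .or φ ψ => max (mlMd φ) (mlMd ψ)
  | .dia φ => mlMd φ + 1
  | .box φ => mlMd φ + 1

/-- `k`-bisimulation between pointed Kripke models. -/
def bisim (K K' : KripkeModel Φ) : ℕ → K.W → K'.W → Prop
  | 0, w, w' => ∀ p, w ∈ K.V p ↔ w' ∈ K'.V p
  | k + 1, w, w' => (∀ p, w ∈ K.V p ↔ w' ∈ K'.V p) ∧
      (∀ v, K.R w v → ∃ v', K'.R w' v' ∧ bisim K K' k v v') ∧
      (∀ v', K'.R w' v' → ∃ v, K.R w v ∧ bisim K K' k v v')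

/-- Team `k`-bisimilarity: domain and range totality. -/
def teamBisim (K K' : KripkeModel Φ) (k : ℕ) (T : Set K.W) (T' : Set K'.W) : Prop :=
  (∀ w ∈ T, ∃ w' ∈ T', bisim K K' k w w') ∧
  (∀ w' ∈ T', ∃ w ∈ T, bisim K K' k w w')

/-- Formulas of modal inclusion logic MINC. -/
inductive MINCFormula (Φ : Type) where
  | atom : Φ → MINCFormula Φ
  | natom : Φ → MINCFormula Φ
  | and : MINCFormula Φ → MINCFormula Φ → MINCFormula Φ
  | or : MINCFormula Φ → MINCFormula Φ → MINCFormula Φ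
  | dia : MINCFormula Φ → MINCFormula Φ
  | box : MINCFormula Φ → MINCFormula Φ
  | inc : List (MLFormula Φ) → List (MLFormula Φ) → MINCFormula Φ

/-- Team semantics for MINC. -/
def mincSat (K : KripkeModel Φ) : MINCFormula Φ → Set K.W → Prop
  | .atom p, T => T ⊆ K.V p
  | .natom p, T => T ∩ K.V p = ∅
  | .and φ ψ, T => mincSat K φ T ∧ mincSat K ψ T
  | .or φ ψ, T => ∃ T₁ T₂, T = T₁ ∪ T₂ ∧ mincSat K φ T₁ ∧ mincSat K ψ T₂
  | .dia φ, T => ∃ S, relStep K T S ∧ mincSat K φ S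
  | .box φ, T => mincSat K φ (img K T)
  | .inc φs ψs, T => ∀ w ∈ T, ∃ v ∈ T,
      ∀ pr ∈ φs.zip ψs, (mlSatW K pr.1 w ↔ mlSatW K pr.2 v)

/-- Modal depth of a MINC formula. -/
def mincMd : MINCFormula Φ → ℕ
  | .atom _ => 0
  | .natom _ => 0
  | .and φ ψ => max (mincMd φ) (mincMd ψ)
  | .or φ ψ => max (mincMd φ) (mincMd ψ)
  | .dia φ => mincMd φ + 1
  | .box φ => mincMd φ + 1
  | .inc φs ψs => ((φs ++ ψs).map mlMd).foldr max 0

/-- Formulas of ML(▽), modal logic with the nonemptiness operator. -/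
inductive NFormula (Φ : Type) where
  | atom : Φ → NFormula Φ
  | natom : Φ → NFormula Φ
  | and : NFormula Φ → NFormula Φ → NFormula Φ
  | or : NFormula Φ → NFormula Φ → NFormula Φ
  | dia : NFormula Φ → NFormula Φ
  | box : NFormula Φ → NFormula Φ
  | ne : NFormula Φ → NFormula Φ

/-- Team semantics for ML(▽). -/
def nSat (K : KripkeModel Φ) : NFormula Φ → Set K.W → Prop
  | .atom p, T => T ⊆ K.V p
  | .natom p, T => T ∩ K.V p = ∅
  | .and φ ψ, T => nSat K φ T ∧ nSat K ψ T
  | .or φ ψ, T => ∃ T₁ T₂, T = T₁ ∪ T₂ ∧ nSat K φ T₁ ∧ nSat K ψ T₂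
  | .dia φ, T => ∃ S, relStep K T S ∧ nSat K φ S
  | .box φ, T => nSat K φ (img K T)
  | .ne φ, T => T = ∅ ∨ ∃ S, S ⊆ T ∧ S.Nonempty ∧ nSat K φ S

/-- Modal depth of an ML(▽) formula. -/
def nMd : NFormula Φ → ℕ
  | .atom _ => 0
  | .natom _ => 0
  | .and φ ψ => max (nMd φ) (nMd ψ)
  | .or φ ψ => max (nMd φ) (nMd ψ)
  | .dia φ => nMd φ + 1
  | .box φ => nMd φ + 1
  | .ne φ => nMd φ

/-- Number of occurrences of ▽ in an ML(▽) formula. -/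
def nCount : NFormula Φ → ℕ
  | .atom _ => 0
  | .natom _ => 0
  | .and φ ψ => nCount φ + nCount ψ
  | .or φ ψ => nCount φ + nCount ψ
  | .dia φ => nCount φ
  | .box φ => nCount φ
  | .ne φ => nCount φ + 1

/-- Subformula occurrence at a position (path) in the syntax tree. -/
def subAt : NFormula Φ → List ℕ → Option (NFormula Φ)
  | φ, [] => some φ
  | .and θ _, 0 :: l => subAt θ l
  | .and _ η, 1 :: l => subAt η l
  | .or θ _, 0 :: l => subAt θ l
  | .or _ η, 1 :: l => subAt η l
  | .dia θ, 0 :: l => subAt θ l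
  | .box θ, 0 :: l => subAt θ l
  | .ne θ, 0 :: l => subAt θ l
  | _, _ => none

/-- `F` is a winning-strategy labeling of the syntax tree of `φ` for `(K,T)`. -/
def IsWinning (K : KripkeModel Φ) (φ : NFormula Φ) (T : Set K.W)
    (F : List ℕ → Set K.W) : Prop :=
  F [] = T ∧
  ∀ π ψ, subAt φ π = some ψ →
    match ψ with
    | .atom p => F π ⊆ K.V p
    | .natom p => F π ∩ K.V p = ∅
    | .and _ _ => F π = F (π ++ [0]) ∧ F π = F (π ++ [1])
    | .or _ _ => F π = F (π ++ [0]) ∪ F (π ++ [1])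
    | .dia _ => relStep K (F π) (F (π ++ [0]))
    | .box _ => F (π ++ [0]) = img K (F π)
    | .ne _ => F (π ++ [0]) ⊆ F π ∧ (F π ≠ ∅ → F (π ++ [0]) ≠ ∅)


open Classical

/-- abstract depth-`k` Hintikka types -/
def TkT (Φ : Type) : ℕ → Type
  | 0 => Φ → Bool
  | k+1 => (Φ → Bool) × (TkT Φ k → Bool)

noncomputable def fintypeTkT (Φ : Type) [Fintype Φ] : ∀ k, Fintype (TkT Φ k)
  | 0 => by letI := Classical.decEq Φ; exact (inferInstance : Fintype (Φ → Bool))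
  | k+1 => by
      letI := fintypeTkT Φ k
      letI : DecidableEq (TkT Φ k) := Classical.decEq _
      letI := Classical.decEq Φ
      exact (inferInstance : Fintype ((Φ → Bool) × (TkT Φ k → Bool)))

noncomputable instance instFintypeTkT [Fintype Φ] (k : ℕ) : Fintype (TkT Φ k) :=
  fintypeTkT Φ k

noncomputable def atomTy (K : KripkeModel Φ) (w : K.W) : Φ → Bool :=
  fun p => decide (w ∈ K.V p)

noncomputable def typeOf (K : KripkeModel Φ) : ∀ k, K.W → TkT Φ k
  | 0, w => atomTy K w
  | k+1, w => (atomTy K w, fun t => decide (∃ v, K.R w v ∧ typeOf K k v = t))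

theorem typeOf_eq_iff_bisim {K K' : KripkeModel Φ} :
    ∀ k (w : K.W) (w' : K'.W), typeOf K k w = typeOf K' k w' ↔ bisim K K' k w w' := by
  intro k
  induction k with
  | zero =>
      intro w w'
      show atomTy K w = atomTy K' w' ↔ _
      simp only [bisim, atomTy, funext_iff, decide_eq_decide]
  | succ k ih =>
      intro w w'
      show ((atomTy K w, _) : (Φ → Bool) × (TkT Φ k → Bool)) = (atomTy K' w', _) ↔ _
      rw [Prod.ext_iff]
      constructor
      · rintro ⟨h1, h2⟩
        refine ⟨?_, ?_, ?_⟩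
        · intro p
          have := congrFun h1 p
          simpa [atomTy, decide_eq_decide] using this
        · intro v hv
          have := congrFun h2 (typeOf K k v)
          simp only [decide_eq_decide] at this
          obtain ⟨v', hv', he⟩ := this.mp ⟨v, hv, rfl⟩
          exact ⟨v', hv', (ih v v').mp he.symm⟩
        · intro v' hv'
          have := congrFun h2 (typeOf K' k v')
          simp only [decide_eq_decide] at this
          obtain ⟨v, hv, he⟩ := this.mpr ⟨v', hv', rfl⟩
          exact ⟨v, hv, (ih v v').mp he⟩
      · rintro ⟨h0, hf, hb⟩
        constructor
        · funext p; simp [atomTy, decide_eq_decide, h0 p]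
        · funext t
          simp only [decide_eq_decide]
          constructor
          · rintro ⟨v, hv, rfl⟩
            obtain ⟨v', hv', hbi⟩ := hf v hv
            exact ⟨v', hv', ((ih v v').mpr hbi).symm⟩
          · rintro ⟨v', hv', rfl⟩
            obtain ⟨v, hv, hbi⟩ := hb v' hv'
            exact ⟨v, hv, (ih v v').mpr hbi⟩



def mlTop (p0 : Φ) : MLFormula Φ := .or (.atom p0) (.natom p0)
def mlBot (p0 : Φ) : MLFormula Φ := .and (.atom p0) (.natom p0)
def conjL (p0 : Φ) (l : List (MLFormula Φ)) : MLFormula Φ := l.foldr .and (mlTop p0)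
def disjL (p0 : Φ) (l : List (MLFormula Φ)) : MLFormula Φ := l.foldr .or (mlBot p0)

theorem sat_conjL {K : KripkeModel Φ} {p0 : Φ} {w : K.W} :
    ∀ {l : List (MLFormula Φ)}, mlSatW K (conjL p0 l) w ↔ ∀ φ ∈ l, mlSatW K φ w
  | [] => by simp [conjL, mlTop, mlSatW]; exact Classical.em _
  | φ :: l => by
      simp [conjL, mlSatW, List.foldr] at *
      rw [show List.foldr MLFormula.and (mlTop p0) l = conjL p0 l from rfl, sat_conjL]
      tauto

theorem sat_disjL {K : KripkeModel Φ} {p0 : Φ} {w : K.W} :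
    ∀ {l : List (MLFormula Φ)}, mlSatW K (disjL p0 l) w ↔ ∃ φ ∈ l, mlSatW K φ w
  | [] => by simp [disjL, mlBot, mlSatW]
  | φ :: l => by
      show mlSatW K φ w ∨ mlSatW K (disjL p0 l) w ↔ _
      rw [sat_disjL]
      simp

theorem md_conjL {p0 : Φ} {n : ℕ} :
    ∀ {l : List (MLFormula Φ)}, (∀ φ ∈ l, mlMd φ ≤ n) → mlMd (conjL p0 l) ≤ n
  | [] => by simp [conjL, mlTop, mlMd]
  | φ :: l => by
      intro h
      simp only [conjL, List.foldr, mlMd, max_le_iff]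
      exact ⟨h φ (by simp), md_conjL fun ψ hψ => h ψ (by simp [hψ])⟩

theorem md_disjL {p0 : Φ} {n : ℕ} :
    ∀ {l : List (MLFormula Φ)}, (∀ φ ∈ l, mlMd φ ≤ n) → mlMd (disjL p0 l) ≤ n
  | [] => by simp [disjL, mlBot, mlMd]
  | φ :: l => by
      intro h
      simp only [disjL, List.foldr, mlMd, max_le_iff]
      exact ⟨h φ (by simp), md_disjL fun ψ hψ => h ψ (by simp [hψ])⟩

noncomputable def chi0 [Fintype Φ] (p0 : Φ) (a : Φ → Bool) : MLFormula Φ :=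
  conjL p0 ((Finset.univ.toList (α := Φ)).map fun p => if a p then .atom p else .natom p)

noncomputable def chiF [Fintype Φ] (p0 : Φ) : ∀ k, TkT Φ k → MLFormula Φ
  | 0, t => chi0 p0 t
  | k+1, t => .and (chi0 p0 t.1) (.and
      (conjL p0 ((Finset.univ.toList (α := TkT Φ k)).map
        fun s => if t.2 s then .dia (chiF p0 k s) else mlTop p0))
      (.box (disjL p0 ((Finset.univ.toList (α := TkT Φ k)).map
        fun s => if t.2 s then chiF p0 k s else mlBot p0))))

theorem md_chi0 [Fintype Φ] {p0 : Φ} {a : Φ → Bool} : mlMd (chi0 p0 a) = 0 := by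
  refine Nat.le_zero.mp (md_conjL ?_)
  intro φ hφ
  simp only [List.mem_map] at hφ
  obtain ⟨p, -, rfl⟩ := hφ
  split <;> simp [mlMd]

theorem md_chiF [Fintype Φ] {p0 : Φ} : ∀ k (t : TkT Φ k), mlMd (chiF p0 k t) ≤ k
  | 0, t => by simp [chiF]; exact md_chi0
  | k+1, t => by
      simp only [chiF, mlMd, max_le_iff]
      refine ⟨by simp [md_chi0], ?_, ?_⟩
      · refine le_trans (md_conjL (n := k+1) ?_) le_rfl
        intro φ hφ
        simp only [List.mem_map] at hφ
        obtain ⟨s, -, rfl⟩ := hφ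
        split
        · simpa [mlMd] using md_chiF k s
        · simp [mlTop, mlMd]
      · have : mlMd (disjL p0 ((Finset.univ.toList (α := TkT Φ k)).map
            fun s => if t.2 s then chiF p0 k s else mlBot p0)) ≤ k := by
          refine md_disjL ?_
          intro φ hφ
          simp only [List.mem_map] at hφ
          obtain ⟨s, -, rfl⟩ := hφ
          split
          · exact md_chiF k s
          · simp [mlBot, mlMd]
        simpa [mlMd] using Nat.succ_le_succ this

theorem sat_chi0 [Fintype Φ] {p0 : Φ} {a : Φ → Bool} {K' : KripkeModel Φ} {w' : K'.W} :
    mlSatW K' (chi0 p0 a) w' ↔ atomTy K' w' = a := by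
  rw [chi0, sat_conjL, funext_iff]
  constructor
  · intro h p
    have := h _ (List.mem_map.mpr ⟨p, by simp [Finset.mem_toList], rfl⟩)
    rcases ha : a p with _ | _ <;> rw [ha] at this <;>
      simp_all [mlSatW, atomTy]
  · intro h φ hφ
    obtain ⟨p, -, rfl⟩ := List.mem_map.mp hφ
    have hp := h p
    rcases ha : a p with _ | _ <;> rw [ha] at hp <;>
      simp only [ha, Bool.false_eq_true, if_false, if_true]
    · exact of_decide_eq_false hp
    · exact of_decide_eq_true hp

theorem sat_chiF [Fintype Φ] {p0 : Φ} {K' : KripkeModel Φ} :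
    ∀ k (t : TkT Φ k) (w' : K'.W), mlSatW K' (chiF p0 k t) w' ↔ typeOf K' k w' = t
  | 0, t, w' => by rw [chiF]; exact sat_chi0
  | k+1, t, w' => by
      rw [chiF]
      show (mlSatW K' (chi0 p0 t.1) w' ∧ _ ∧ _) ↔ _
      rw [sat_chi0, sat_conjL]
      show _ ↔ ((atomTy K' w', fun s => decide (∃ v, K'.R w' v ∧ typeOf K' k v = s))
          : (Φ → Bool) × (TkT Φ k → Bool)) = t
      refine Iff.trans ?_ Prod.ext_iff.symm
      constructor
      · rintro ⟨h1, h2, h3⟩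
        refine ⟨h1, funext fun s => ?_⟩
        simp only [mlSatW] at h3
        rcases hs : t.2 s with _ | _
        · simp only [decide_eq_false_iff_not]
          rintro ⟨v, hv, rfl⟩
          obtain ⟨ψ, hψ, hsat⟩ := sat_disjL.mp (h3 v hv)
          obtain ⟨u, -, rfl⟩ := List.mem_map.mp hψ
          rcases hu : t.2 u with _ | _ <;> rw [hu] at hsat
          · exact absurd hsat.1 hsat.2
          · rw [if_pos rfl] at hsat
            rw [sat_chiF k u v] at hsat
            rw [hsat] at hs; rw [hs] at hu; exact Bool.false_ne_true hu
        · simp only [decide_eq_true_eq]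
          have := h2 _ (List.mem_map.mpr ⟨s, by simp [Finset.mem_toList], rfl⟩)
          rw [hs] at this
          obtain ⟨v, hv, hsat⟩ := this
          exact ⟨v, hv, (sat_chiF k s v).mp hsat⟩
      · rintro ⟨h1, h2⟩
        refine ⟨h1, ?_, ?_⟩
        · intro φ hφ
          obtain ⟨s, -, rfl⟩ := List.mem_map.mp hφ
          rcases hs : t.2 s with _ | _
          · show mlSatW K' (mlTop p0) w'
            simp [mlTop, mlSatW]; exact Classical.em _
          · have := congrFun h2 s
            rw [hs, decide_eq_true_eq] at this
            obtain ⟨v, hv, hty⟩ := this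
            exact ⟨v, hv, (sat_chiF k s v).mpr hty⟩
        · intro v hv
          rw [sat_disjL]
          refine ⟨if t.2 (typeOf K' k v) then chiF p0 k (typeOf K' k v) else mlBot p0,
            List.mem_map.mpr ⟨typeOf K' k v, by simp [Finset.mem_toList], rfl⟩, ?_⟩
          have hdec : t.2 (typeOf K' k v) = true := by
            rw [← congrFun h2 (typeOf K' k v)]
            exact decide_eq_true ⟨v, hv, rfl⟩
          rw [if_pos hdec]
          exact (sat_chiF k _ v).mpr rfl

theorem bisim_atoms {K K' : KripkeModel Φ} {k : ℕ} {w : K.W} {w' : K'.W}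
    (h : bisim K K' k w w') : ∀ p, w ∈ K.V p ↔ w' ∈ K'.V p := by
  cases k with
  | zero => exact h
  | succ k => exact h.1

theorem bisim_succ {K K' : KripkeModel Φ} :
    ∀ (k : ℕ) (w : K.W) (w' : K'.W), bisim K K' (k+1) w w' → bisim K K' k w w'
  | 0, w, w', h => h.1
  | k+1, w, w', ⟨h0, hf, hb⟩ =>
      ⟨h0,
       fun v hv => (hf v hv).imp fun v' hv' => ⟨hv'.1, bisim_succ k v v' hv'.2⟩,
       fun v' hv' => (hb v' hv').imp fun v hv => ⟨hv.1, bisim_succ k v v' hv.2⟩⟩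

theorem bisim_mono {K K' : KripkeModel Φ} {j k : ℕ} (hjk : j ≤ k) {w : K.W} {w' : K'.W}
    (h : bisim K K' k w w') : bisim K K' j w w' := by
  induction k with
  | zero => rwa [Nat.le_zero.mp hjk]
  | succ k ih =>
      rcases Nat.lt_or_ge j (k+1) with hl | hg
      · exact ih (Nat.lt_succ_iff.mp hl) (bisim_succ k w w' h)
      · rwa [Nat.le_antisymm hjk hg]

theorem bisim_sat {K K' : KripkeModel Φ} :
    ∀ (φ : MLFormula Φ) (k : ℕ) (w : K.W) (w' : K'.W), mlMd φ ≤ k →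
      bisim K K' k w w' → (mlSatW K φ w ↔ mlSatW K' φ w')
  | .atom p, k, w, w', _, h => bisim_atoms h p
  | .natom p, k, w, w', _, h => not_congr (bisim_atoms h p)
  | .and φ ψ, k, w, w', hm, h => by
      simp only [mlMd, max_le_iff] at hm
      exact and_congr (bisim_sat φ k w w' hm.1 h) (bisim_sat ψ k w w' hm.2 h)
  | .or φ ψ, k, w, w', hm, h => by
      simp only [mlMd, max_le_iff] at hm
      exact or_congr (bisim_sat φ k w w' hm.1 h) (bisim_sat ψ k w w' hm.2 h)
  | .dia φ, k, w, w', hm, h => by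
      simp only [mlMd] at hm
      obtain ⟨h0, hf, hb⟩ := bisim_mono hm h
      constructor
      · rintro ⟨v, hv, hs⟩
        obtain ⟨v', hv', hbi⟩ := hf v hv
        exact ⟨v', hv', (bisim_sat φ (mlMd φ) v v' le_rfl hbi).mp hs⟩
      · rintro ⟨v', hv', hs⟩
        obtain ⟨v, hv, hbi⟩ := hb v' hv'
        exact ⟨v, hv, (bisim_sat φ (mlMd φ) v v' le_rfl hbi).mpr hs⟩
  | .box φ, k, w, w', hm, h => by
      simp only [mlMd] at hm
      obtain ⟨h0, hf, hb⟩ := bisim_mono hm h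
      constructor
      · intro hs v' hv'
        obtain ⟨v, hv, hbi⟩ := hb v' hv'
        exact (bisim_sat φ (mlMd φ) v v' le_rfl hbi).mp (hs v hv)
      · intro hs v hv
        obtain ⟨v', hv', hbi⟩ := hf v hv
        exact (bisim_sat φ (mlMd φ) v v' le_rfl hbi).mpr (hs v' hv')

/-- Hintikka formula characterisation: `k`-equivalence, `k`-bisimilarity, and
satisfaction of the `k`-th Hintikka formula of `(K,w)` are all equivalent. -/
theorem hintikka_characterisation [Fintype Φ] [Nonempty Φ] (k : ℕ)
    (K : KripkeModel Φ) (w : K.W) :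
    ∃ χ : MLFormula Φ, mlMd χ ≤ k ∧
      ∀ (K' : KripkeModel Φ) (w' : K'.W),
        ((∀ φ : MLFormula Φ, mlMd φ ≤ k → (mlSatW K φ w ↔ mlSatW K' φ w')) ↔
            bisim K K' k w w') ∧
        (bisim K K' k w w' ↔ mlSatW K' χ w') := by
  obtain ⟨p0⟩ := ‹Nonempty Φ›
  refine ⟨chiF p0 k (typeOf K k w), md_chiF k _, fun K' w' => ?_⟩
  have hchi : mlSatW K' (chiF p0 k (typeOf K k w)) w' ↔ bisim K K' k w w' := by
    rw [sat_chiF k _ w']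
    constructor
    · intro h; exact (typeOf_eq_iff_bisim k w w').mp h.symm
    · intro h; exact ((typeOf_eq_iff_bisim k w w').mpr h).symm
  refine ⟨⟨fun h => ?_, fun h φ hφ => bisim_sat φ k w w' hφ h⟩, hchi.symm⟩
  have hw : mlSatW K (chiF p0 k (typeOf K k w)) w := (sat_chiF k _ w).mpr rfl
  exact hchi.mp ((h _ (md_chiF k _)).mp hw)

end TeamSem
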